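/- Let V be an additive abelian group, τ, σ, ρ : V → ℝ satisfying the Ablowitz-Ladik-Hirota relations for pairs from {α, β, γ}, with τ nowhere zero. Then R(α,β,γ)(x) = 0 for all x, where R(α,β,γ)(x) := a(α,β)·ρ(x)·τ(x+α+β+γ) − b(β,γ)·ρ(x+β)·τ(x+α+γ) + b(α,γ)·ρ(x+α)·τ(x+β+γ). -/
import Mathlib


theorem R_identity
    {V : Type*} [AddCommGroup V]
    (τ σ ρ : V → ℝ) (α β γ : V)
    (a b : V → V → ℝ)
    (haskew : ∀ ξ η, a ξ η = - a η ξ)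
    (hbsymm : ∀ ξ η, b ξ η = b η ξ)
    (hσ : ∀ ξ ∈ ({α, β, γ} : Set V), ∀ η ∈ ({α, β, γ} : Set V), ∀ x : V,
      a ξ η * τ x * σ (x + ξ + η) =
        σ (x + ξ) * τ (x + η) - τ (x + ξ) * σ (x + η))
    (hρ : ∀ ξ ∈ ({α, β, γ} : Set V), ∀ η ∈ ({α, β, γ} : Set V), ∀ x : V,
      a ξ η * ρ x * τ (x + ξ + η) =
        τ (x + ξ) * ρ (x + η) - ρ (x + ξ) * τ (x + η))
    (ht : ∀ ξ ∈ ({α, β, γ} : Set V), ∀ η ∈ ({α, β, γ} : Set V), ∀ x : V,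
      τ x * τ (x + ξ + η) + ρ x * σ (x + ξ + η) =
        b ξ η * τ (x + ξ) * τ (x + η))
    (hτ0 : ∀ x, τ x ≠ 0) :
    ∀ x : V,
      a α β * ρ x * τ (x + α + β + γ)
      - b β γ * ρ (x + β) * τ (x + α + γ)
      + b α γ * ρ (x + α) * τ (x + β + γ) = 0 := by
  intro x
  have hα : α ∈ ({α, β, γ} : Set V) := by simp
  have hβ : β ∈ ({α, β, γ} : Set V) := by simp
  have hγ : γ ∈ ({α, β, γ} : Set V) := by simp
  have h1 := hρ α hα β hβ x
  have h2 := ht β hβ γ hγ (x + α)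
  have h3 := ht α hα γ hγ (x + β)
  rw [show x + β + α + γ = x + α + β + γ by abel,
      show x + β + α = x + α + β by abel] at h3
  have key : τ (x + α + β) *
      (a α β * ρ x * τ (x + α + β + γ)
      - b β γ * ρ (x + β) * τ (x + α + γ)
      + b α γ * ρ (x + α) * τ (x + β + γ)) = 0 := by
    linear_combination τ (x + α + β + γ) * h1 + ρ (x + β) * h2 - ρ (x + α) * h3
  exact (mul_eq_zero.mp key).resolve_left (hτ0 _)
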